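/- With the notation of the two-level atom master equation, Γ² can be rewritten as (‖α‖² + ‖P_⊥ΔSλ‖² + 2|⟨α̃|S⁻λ⟩|² − 2Re⟨S⁺λ|P_α S⁻λ⟩)² + |⟨α̃|(S⁺+S⁻)λ⟩|² [‖α‖²(1+κ²) + ‖P_⊥ΔSλ‖²], and in particular Γ² > 0 whenever ‖α‖ > 0. -/

import Mathlib

open Complex

/-- The orthogonal projection `P_α` onto the span of the (nonzero) vector `α`:
`P_α x = ⟨α̃|x⟩ α̃` with `α̃ = α/‖α‖`. -/
noncomputable def projAlpha {Z : Type*} [NormedAddCommGroup Z] [InnerProductSpace ℂ Z]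
    (α x : Z) : Z :=
  (inner ℂ (((‖α‖ : ℝ)⁻¹ : ℂ) • α) x : ℂ) • (((‖α‖ : ℝ)⁻¹ : ℂ) • α)

/-- `Γ²` can be rewritten as
`(‖α‖² + ‖P_⊥ΔSλ‖² + 2|⟨α̃|S⁻λ⟩|² − 2Re⟨S⁺λ|P_α S⁻λ⟩)²
  + |⟨α̃|(S⁺+S⁻)λ⟩|² [‖α‖²(1+κ²) + ‖P_⊥ΔSλ‖²]`,
and in particular `Γ² > 0` whenever `‖α‖ > 0` (i.e. `α ≠ 0`). -/
theorem Gamma_sq_rewrite_pos {Z : Type*} [NormedAddCommGroup Z] [InnerProductSpace ℂ Z]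
    (α lam : Z) (hα : α ≠ 0) (Sp Sm : Z ≃ₗᵢ[ℂ] Z) (κ2 Γ2 : ℝ)
    (hκ : κ2 = 1 + ‖Sp lam - Sm lam‖ ^ 2 / ‖α‖ ^ 2)
    (hΓ : Γ2 = κ2 ^ 2 * ‖α‖ ^ 4 +
      4 * κ2 * ‖α‖ ^ 2 * ((inner ℂ (Sm lam) (projAlpha α (Sp lam + Sm lam)) : ℂ)).re -
      4 * ((inner ℂ (Sp lam) (projAlpha α (Sm lam)) : ℂ)).im ^ 2) :
    Γ2 = (‖α‖ ^ 2 + ‖(Sp lam - Sm lam) - projAlpha α (Sp lam - Sm lam)‖ ^ 2 +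
        2 * ‖(inner ℂ (((‖α‖ : ℝ)⁻¹ : ℂ) • α) (Sm lam) : ℂ)‖ ^ 2 -
        2 * ((inner ℂ (Sp lam) (projAlpha α (Sm lam)) : ℂ)).re) ^ 2 +
      ‖(inner ℂ (((‖α‖ : ℝ)⁻¹ : ℂ) • α) (Sp lam + Sm lam) : ℂ)‖ ^ 2 *
        (‖α‖ ^ 2 * (1 + κ2) +
          ‖(Sp lam - Sm lam) - projAlpha α (Sp lam - Sm lam)‖ ^ 2) ∧
    0 < Γ2 := by
  have hA : (0:ℝ) < ‖α‖ := norm_pos_iff.mpr hα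
  set u : Z := (((‖α‖ : ℝ)⁻¹ : ℂ)) • α with hu
  have hunorm : ‖u‖ = 1 := by
    rw [hu, norm_smul]
    simp [hA.ne']
  set Δ : Z := Sp lam - Sm lam with hΔ
  set p : ℂ := inner ℂ u (Sp lam) with hp
  set m : ℂ := inner ℂ u (Sm lam) with hm
  have hpm : (inner ℂ u Δ : ℂ) = p - m := by rw [hΔ, inner_sub_right]
  have hsum : (inner ℂ u (Sp lam + Sm lam) : ℂ) = p + m := by rw [inner_add_right]
  have hc1 : (inner ℂ (Sm lam) (projAlpha α (Sp lam + Sm lam)) : ℂ) = (p + m) * (starRingEnd ℂ) m := by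
    rw [projAlpha]
    rw [← hu, inner_smul_right, hsum, ← inner_conj_symm, ← hm]
  have hc2 : (inner ℂ (Sp lam) (projAlpha α (Sm lam)) : ℂ) = m * (starRingEnd ℂ) p := by
    rw [projAlpha]
    rw [← hu, inner_smul_right, ← hm, ← inner_conj_symm, ← hp]
  have hprojΔ : projAlpha α Δ = (p - m) • u := by
    rw [projAlpha, ← hu, hpm]
  have hΔu : (inner ℂ Δ u : ℂ) = (starRingEnd ℂ) (p - m) := by
    rw [← hpm, inner_conj_symm]
  have hnorm : ‖Δ - projAlpha α Δ‖ ^ 2 = ‖Δ‖ ^ 2 - ‖p - m‖ ^ 2 := by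
    rw [hprojΔ, norm_sub_sq (𝕜 := ℂ), inner_smul_right, hΔu, Complex.mul_conj, norm_smul,
      hunorm]
    simp [Complex.normSq_eq_norm_sq, ← Complex.ofReal_pow]
    ring
  have hCS : ‖p - m‖ ≤ ‖Δ‖ := by
    have := norm_inner_le_norm (𝕜 := ℂ) u Δ
    rwa [hpm, hunorm, one_mul] at this
  have hCS2 : ‖p - m‖ ^ 2 ≤ ‖Δ‖ ^ 2 :=
    pow_le_pow_left₀ (norm_nonneg _) hCS 2
  rw [hc1, hc2] at hΓ
  rw [hc2, hnorm, hsum]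
  -- now pure scalar algebra
  set A : ℝ := ‖α‖ with hA'
  set D : ℝ := ‖Δ‖ with hD'
  have hD0 : 0 ≤ D := norm_nonneg _
  have hκeq : κ2 * A ^ 2 = A ^ 2 + D ^ 2 := by
    rw [hκ]; field_simp
  have hκ1 : 1 ≤ κ2 := by
    have h0 : (0:ℝ) ≤ D ^ 2 / A ^ 2 := by positivity
    rw [hκ]; linarith
  clear_value u Δ p m A D
  subst hΓ
  have habs : ∀ z : ℂ, ‖z‖ ^ 2 = z.re ^ 2 + z.im ^ 2 := by
    intro z; rw [Complex.sq_norm, Complex.normSq_apply]; ring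
  simp only [habs] at hCS2 ⊢
  simp only [Complex.mul_re, Complex.mul_im, Complex.conj_re, Complex.conj_im,
    Complex.add_re, Complex.add_im, Complex.sub_re, Complex.sub_im] at hCS2 ⊢
  have key : κ2 ^ 2 * A ^ 4 +
        4 * κ2 * A ^ 2 * ((p.re + m.re) * m.re + (p.im + m.im) * m.im) -
        4 * (m.im * p.re - m.re * p.im) ^ 2
      = (A ^ 2 + (D ^ 2 - ((p.re - m.re) ^ 2 + (p.im - m.im) ^ 2)) +
          2 * (m.re ^ 2 + m.im ^ 2) - 2 * (m.re * p.re + m.im * p.im)) ^ 2 +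
        ((p.re + m.re) ^ 2 + (p.im + m.im) ^ 2) *
          (A ^ 2 * (1 + κ2) + (D ^ 2 - ((p.re - m.re) ^ 2 + (p.im - m.im) ^ 2))) := by
    linear_combination (κ2 * A ^ 2 + A ^ 2 + D ^ 2 +
      4 * ((p.re + m.re) * m.re + (p.im + m.im) * m.im) -
      ((p.re + m.re) ^ 2 + (p.im + m.im) ^ 2)) * hκeq
  constructor
  · linarith [key]
  · rcases eq_or_ne (p + m) 0 with h | h
    · have heq : p = -m := eq_neg_of_add_eq_zero_left h
      simp only [heq, Complex.neg_re, Complex.neg_im]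
      have h4 : 0 < κ2 ^ 2 * A ^ 4 :=
        mul_pos (pow_pos (by linarith : (0:ℝ) < κ2) 2) (pow_pos hA 4)
      linarith [h4]
    · have hS : 0 < (p.re + m.re) ^ 2 + (p.im + m.im) ^ 2 := by
        have h2 := Complex.normSq_pos.mpr h
        simp only [Complex.normSq_apply, Complex.add_re, Complex.add_im] at h2
        rw [pow_two, pow_two]; exact h2
      have hW : (0:ℝ) < A ^ 2 * (1 + κ2) +
          (D ^ 2 - ((p.re - m.re) ^ 2 + (p.im - m.im) ^ 2)) := by
        have h3 : (0:ℝ) < A ^ 2 := pow_pos hA 2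
        have h5 : A ^ 2 * 2 ≤ A ^ 2 * (1 + κ2) :=
          mul_le_mul_of_nonneg_left (by linarith) h3.le
        linarith [hCS2]
      linarith [key, mul_pos hS hW,
        sq_nonneg (A ^ 2 + (D ^ 2 - ((p.re - m.re) ^ 2 + (p.im - m.im) ^ 2)) +
          2 * (m.re ^ 2 + m.im ^ 2) - 2 * (m.re * p.re + m.im * p.im))]
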